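/- As x₃ → m⁺ (equivalently a → 1/(4(M-m))⁻ along the foliation), the function B(x₁, x₂, x₃; m, M) extends continuously to the lower lid x₃ = m with limit value B(x₁, x₂, m; m, M) = 4(M-m)(x₂ - x₁²) + m x₂. -/

import Mathlib

open Filter Set Topology

lemma key_ineq (m M x₁ x₂ t x₃ : ℝ) (hmM : m < M) (hx : x₁^2 < x₂)
    (ht0 : 0 < t) (ht1 : t < 1/(4*(M - m))) (hx3 : m < x₃) (hx3M : x₃ ≤ M)
    (heq : x₁^2/x₂ = ((1 - 2*t*(M - x₃))/(1 - 2*t*(M - m)))^2 *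
      ((1 - 4*t*(M - m))/(1 - 4*t*(M - x₃)))) :
    (x₂ - x₁^2) * (1 - 4*t*(M - m)) * (M - m) ≤ x₁^2 * (x₃ - m) := by
  have hδ : 0 < M - m := by linarith
  have hx₂ : 0 < x₂ := lt_of_le_of_lt (sq_nonneg x₁) hx
  have h4 : 4*t*(M - m) < 1 := by
    have := (lt_div_iff₀ (by positivity : (0:ℝ) < 4*(M - m))).mp ht1
    linarith
  have hτ : 0 ≤ M - x₃ := by linarith
  have hτδ : M - x₃ < M - m := by linarith
  have h4τ : 0 < 1 - 4*t*(M - x₃) := by nlinarith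
  have h2δ : 0 < 1 - 2*t*(M - m) := by nlinarith
  have h2τ : 0 < 1 - 2*t*(M - x₃) := by nlinarith
  have hpoly : x₁^2 * (1 - 2*t*(M - m))^2 * (1 - 4*t*(M - x₃))
      = x₂ * (1 - 2*t*(M - x₃))^2 * (1 - 4*t*(M - m)) := by
    field_simp at heq
    rw [eq_div_iff (ne_of_gt (by linarith))] at heq
    linarith [heq]
  have hsq : (1 - 2*t*(M - m))^2 ≤ (1 - 2*t*(M - x₃))^2 :=
    pow_le_pow_left₀ h2δ.le (by nlinarith [mul_le_mul_of_nonneg_left hτδ.le ht0.le]) 2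
  have h2 : x₂ * (1 - 4*t*(M - m)) ≤ x₁^2 * (1 - 4*t*(M - x₃)) := by
    nlinarith [mul_pos (mul_pos h2τ h2τ) h4τ, sq_nonneg x₁,
      mul_nonneg (mul_nonneg (sq_nonneg x₁) (sub_nonneg.2 hsq)) h4τ.le,
      mul_pos h2τ h2τ]
  nlinarith [mul_le_mul_of_nonneg_right h2 hδ.le,
    mul_nonneg (mul_nonneg (by linarith : (0:ℝ) ≤ 1 - 4*t*(M - m)) (sq_nonneg x₁))
      (by linarith : (0:ℝ) ≤ x₃ - m),
    mul_nonneg (mul_nonneg ht0.le (sq_nonneg x₁)) (by linarith : (0:ℝ) ≤ x₃ - m)]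

/-- As x₃ → m⁺, the function B(x₁,x₂,x₃;m,M) (in the form \eqref{firstB})
extends continuously to the lower lid with limit 4(M-m)(x₂-x₁²) + m x₂. -/
theorem stmt7 (m M x₁ x₂ : ℝ) (hmM : m < M) (hx : x₁^2 < x₂)
    (a : ℝ → ℝ)
    (haI : ∀ x₃ ∈ Set.Ioc m M, a x₃ ∈ Set.Ioo 0 (1/(4*(M - m))))
    (ha : ∀ x₃ ∈ Set.Ioc m M, x₁^2/x₂ =
      ((1 - 2*(a x₃)*(M - x₃))/(1 - 2*(a x₃)*(M - m)))^2 *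
      ((1 - 4*(a x₃)*(M - m))/(1 - 4*(a x₃)*(M - x₃)))) :
    Tendsto (fun x₃ => -x₁^2/(2*(a x₃)*(1 - 2*(a x₃)*(M - x₃)))
        + (m + 1/(2*(a x₃)*(1 - 2*(a x₃)*(M - m))))*x₂)
      (nhdsWithin m (Set.Ioi m)) (nhds (4*(M - m)*(x₂ - x₁^2) + m*x₂)) := by

  have hδ : 0 < M - m := by linarith
  have hx₂ : 0 < x₂ := lt_of_le_of_lt (sq_nonneg x₁) hx
  set A : ℝ := 1/(4*(M - m)) with hAdef
  have hA0 : 0 < A := by positivity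
  have hmem : Set.Ioo m M ∈ nhdsWithin m (Set.Ioi m) :=
    Ioo_mem_nhdsGT_of_mem ⟨le_refl m, hmM⟩
  -- lower bound function
  have hlow : ∀ x₃ ∈ Set.Ioo m M,
      A - x₁^2*(x₃ - m)/(4*(M - m)^2*(x₂ - x₁^2)) ≤ a x₃ := by
    intro x₃ hx₃
    have hx₃' : x₃ ∈ Set.Ioc m M := ⟨hx₃.1, hx₃.2.le⟩
    obtain ⟨ht0, ht1⟩ := haI x₃ hx₃'
    have hk := key_ineq m M x₁ x₂ (a x₃) x₃ hmM hx ht0 ht1 hx₃.1 hx₃.2.le (ha x₃ hx₃')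
    have hpos : (0:ℝ) < 4*(M - m)^2*(x₂ - x₁^2) := mul_pos (by positivity) (by linarith)
    have hA2 : A*(4*(M - m)^2*(x₂ - x₁^2)) = (M - m)*(x₂ - x₁^2) := by
      rw [hAdef]; field_simp
    rw [sub_le_iff_le_add, ← sub_le_iff_le_add', le_div_iff₀ hpos]
    nlinarith [hk, hA2]
  -- squeeze: a → A
  have hA : Tendsto a (nhdsWithin m (Set.Ioi m)) (nhds A) := by
    apply tendsto_of_tendsto_of_tendsto_of_le_of_le'
      (g := fun x₃ => A - x₁^2*(x₃ - m)/(4*(M - m)^2*(x₂ - x₁^2)))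
      (h := fun _ => A)
    · have hc : Tendsto (fun x₃ : ℝ => A - x₁^2*(x₃ - m)/(4*(M - m)^2*(x₂ - x₁^2)))
          (nhds m) (nhds (A - x₁^2*(m - m)/(4*(M - m)^2*(x₂ - x₁^2)))) := by
        apply Continuous.tendsto
        continuity
      simpa using hc.mono_left nhdsWithin_le_nhds
    · exact tendsto_const_nhds
    · filter_upwards [hmem] with x₃ hx₃ using hlow x₃ hx₃
    · filter_upwards [hmem] with x₃ hx₃ using (haI x₃ ⟨hx₃.1, hx₃.2.le⟩).2.le
  have hid : Tendsto (fun x₃ : ℝ => x₃) (nhdsWithin m (Set.Ioi m)) (nhds m) :=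
    tendsto_id.mono_left nhdsWithin_le_nhds
  have hd1 : Tendsto (fun x₃ => 2*(a x₃)*(1 - 2*(a x₃)*(M - x₃)))
      (nhdsWithin m (Set.Ioi m)) (nhds (2*A*(1 - 2*A*(M - m)))) :=
    ((tendsto_const_nhds.mul hA).mul
      (tendsto_const_nhds.sub ((tendsto_const_nhds.mul hA).mul
        (tendsto_const_nhds.sub hid))))
  have hd2 : Tendsto (fun x₃ => 2*(a x₃)*(1 - 2*(a x₃)*(M - m)))
      (nhdsWithin m (Set.Ioi m)) (nhds (2*A*(1 - 2*A*(M - m)))) :=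
    ((tendsto_const_nhds.mul hA).mul
      (tendsto_const_nhds.sub ((tendsto_const_nhds.mul hA).mul tendsto_const_nhds)))
  have hval : 2*A*(1 - 2*A*(M - m)) = 1/(4*(M - m)) := by
    rw [hAdef]; field_simp; ring
  have hne : 2*A*(1 - 2*A*(M - m)) ≠ 0 := by
    rw [hval]; positivity
  have hmain : Tendsto (fun x₃ => -x₁^2/(2*(a x₃)*(1 - 2*(a x₃)*(M - x₃)))
        + (m + 1/(2*(a x₃)*(1 - 2*(a x₃)*(M - m))))*x₂)
      (nhdsWithin m (Set.Ioi m))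
      (nhds (-x₁^2/(2*A*(1 - 2*A*(M - m)))
        + (m + 1/(2*A*(1 - 2*A*(M - m))))*x₂)) :=
    (tendsto_const_nhds.div hd1 hne).add
      ((tendsto_const_nhds.add (tendsto_const_nhds.div hd2 hne)).mul tendsto_const_nhds)
  have hLeq : -x₁^2/(2*A*(1 - 2*A*(M - m))) + (m + 1/(2*A*(1 - 2*A*(M - m))))*x₂
      = 4*(M - m)*(x₂ - x₁^2) + m*x₂ := by
    rw [hval]
    field_simp
    ring
  rwa [hLeq] at hmain
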